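/- Fix ε > 0 and η ∈ C_c^1(ℝ^N; ℝ). Define I(ρ)(x) = -ε (ρ*∇η)(x) / √(1 + ‖(ρ*∇η)(x)‖²). Then for all r₁, r₂ ∈ L¹(ℝ^N; [0,R]), ‖I(r₁) - I(r₂)‖_{L¹} ≤ ε (1 + R² ‖∇η‖_{L¹}²) ‖∇η‖_{L¹} ‖r₁ - r₂‖_{L¹}. -/

import Mathlib

open MeasureTheory

lemma key_frac {F : Type*} [NormedAddCommGroup F] [NormedSpace ℝ F] (M : ℝ) (a b : F)
    (ha : ‖a‖ ≤ M) (hb : ‖b‖ ≤ M) :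
    ‖(Real.sqrt (1 + ‖a‖ ^ 2))⁻¹ • a - (Real.sqrt (1 + ‖b‖ ^ 2))⁻¹ • b‖
      ≤ (1 + M ^ 2) * ‖a - b‖ := by
  have hM : 0 ≤ M := le_trans (norm_nonneg a) ha
  set A := Real.sqrt (1 + ‖a‖ ^ 2) with hAdef
  set B := Real.sqrt (1 + ‖b‖ ^ 2) with hBdef
  have hA1 : 1 ≤ A := Real.one_le_sqrt.2 (by nlinarith [sq_nonneg ‖a‖])
  have hB1 : 1 ≤ B := Real.one_le_sqrt.2 (by nlinarith [sq_nonneg ‖b‖])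
  have hA0 : 0 < A := lt_of_lt_of_le one_pos hA1
  have hB0 : 0 < B := lt_of_lt_of_le one_pos hB1
  have hA2 : A ^ 2 = 1 + ‖a‖ ^ 2 := Real.sq_sqrt (by positivity)
  have hB2 : B ^ 2 = 1 + ‖b‖ ^ 2 := Real.sq_sqrt (by positivity)
  have hdecomp : A⁻¹ • a - B⁻¹ • b = A⁻¹ • (a - b) + (A⁻¹ - B⁻¹) • b := by
    rw [smul_sub, sub_smul]; abel
  have h1 : ‖A⁻¹ • (a - b)‖ ≤ ‖a - b‖ := by
    rw [norm_smul, Real.norm_eq_abs, abs_of_pos (inv_pos.2 hA0)]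
    nlinarith [norm_nonneg (a - b), inv_le_one_of_one_le₀ hA1, inv_pos.2 hA0]
  -- |B - A| ≤ M * ‖a - b‖
  have hnn : |‖b‖ - ‖a‖| ≤ ‖a - b‖ := by
    calc |‖b‖ - ‖a‖| ≤ ‖b - a‖ := abs_norm_sub_norm_le b a
      _ = ‖a - b‖ := norm_sub_rev b a
  have hsq : |B ^ 2 - A ^ 2| ≤ 2 * M * ‖a - b‖ := by
    rw [hA2, hB2]
    have : (1 + ‖b‖ ^ 2) - (1 + ‖a‖ ^ 2) = (‖b‖ - ‖a‖) * (‖b‖ + ‖a‖) := by ring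
    rw [this, abs_mul, abs_of_nonneg (by positivity : (0:ℝ) ≤ ‖b‖ + ‖a‖)]
    nlinarith [abs_nonneg (‖b‖ - ‖a‖), norm_nonneg (a - b)]
  have hBA : |B - A| ≤ M * ‖a - b‖ := by
    have hfac : (B - A) * (B + A) = B ^ 2 - A ^ 2 := by ring
    have h2le : 2 ≤ B + A := by linarith
    have : |B - A| * 2 ≤ |B - A| * (B + A) := by
      apply mul_le_mul_of_nonneg_left h2le (abs_nonneg _)
    have heq : |B - A| * (B + A) = |B ^ 2 - A ^ 2| := by
      rw [← hfac, abs_mul, abs_of_nonneg (by linarith : (0:ℝ) ≤ B + A)]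
    nlinarith [abs_nonneg (B - A)]
  have h2 : ‖(A⁻¹ - B⁻¹) • b‖ ≤ M ^ 2 * ‖a - b‖ := by
    rw [norm_smul, Real.norm_eq_abs]
    have hinv : A⁻¹ - B⁻¹ = (B - A) / (A * B) := by
      field_simp
    have habs : |A⁻¹ - B⁻¹| ≤ |B - A| := by
      rw [hinv, abs_div, abs_of_pos (mul_pos hA0 hB0)]
      apply div_le_self (abs_nonneg _)
      nlinarith
    calc |A⁻¹ - B⁻¹| * ‖b‖ ≤ (M * ‖a - b‖) * M := by
          apply mul_le_mul (le_trans habs hBA) hb (norm_nonneg b)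
          positivity
      _ = M ^ 2 * ‖a - b‖ := by ring
  calc ‖A⁻¹ • a - B⁻¹ • b‖ = ‖A⁻¹ • (a - b) + (A⁻¹ - B⁻¹) • b‖ := by rw [hdecomp]
    _ ≤ ‖A⁻¹ • (a - b)‖ + ‖(A⁻¹ - B⁻¹) • b‖ := norm_add_le _ _
    _ ≤ ‖a - b‖ + M ^ 2 * ‖a - b‖ := add_le_add h1 h2
    _ = (1 + M ^ 2) * ‖a - b‖ := by ring

set_option maxHeartbeats 2000000 in
/-- Lipschitz estimate in `L¹` for the nonlocal deviation operator
`I(ρ) = -ε (ρ*∇η)/√(1+‖ρ*∇η‖²)`: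
`‖I(r₁) - I(r₂)‖_{L¹} ≤ ε (1 + R²‖∇η‖_{L¹}²) ‖∇η‖_{L¹} ‖r₁ - r₂‖_{L¹}`. -/
theorem stmt4 (N : ℕ) (hN : 0 < N) (ε R : ℝ) (hε : 0 < ε) (hR : 0 < R)
    (η : EuclideanSpace ℝ (Fin N) → ℝ) (hη : ContDiff ℝ 1 η)
    (hηc : HasCompactSupport η)
    (I : (EuclideanSpace ℝ (Fin N) → ℝ) → EuclideanSpace ℝ (Fin N) → EuclideanSpace ℝ (Fin N))
    (hI : ∀ ρ x, I ρ x =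
      -((ε * (Real.sqrt (1 + ‖∫ y, ρ y • gradient η (x - y)‖ ^ 2))⁻¹) •
        ∫ y, ρ y • gradient η (x - y)))
    (r₁ r₂ : EuclideanSpace ℝ (Fin N) → ℝ)
    (h1 : Integrable r₁) (h2 : Integrable r₂)
    (hb1 : ∀ x, r₁ x ∈ Set.Icc 0 R) (hb2 : ∀ x, r₂ x ∈ Set.Icc 0 R) :
    (∫ x, ‖I r₁ x - I r₂ x‖) ≤
      ε * (1 + R ^ 2 * (∫ z, ‖gradient η z‖) ^ 2) * (∫ z, ‖gradient η z‖) *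
        ∫ y, |r₁ y - r₂ y| := by
  set g : EuclideanSpace ℝ (Fin N) → EuclideanSpace ℝ (Fin N) := gradient η with hg
  -- continuity and compact support of the gradient
  have hgeq : g = (fun L => (InnerProductSpace.toDual ℝ (EuclideanSpace ℝ (Fin N))).symm L) ∘ (fderiv ℝ η) := by
    funext x; rfl
  have hgcont : Continuous g := by
    rw [hgeq]
    exact (InnerProductSpace.toDual ℝ (EuclideanSpace ℝ (Fin N))).symm.continuous.comp
      (hη.continuous_fderiv one_ne_zero)
  have hgsupp : HasCompactSupport g := by
    rw [hgeq]
    exact HasCompactSupport.comp_left (hηc.fderiv (𝕜 := ℝ)) (by simp)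
  have hgInt : Integrable g := hgcont.integrable_of_hasCompactSupport hgsupp
  -- L¹ norm of g and the constant M
  set K : ℝ := ∫ z, ‖g z‖ with hK
  have hK0 : 0 ≤ K := integral_nonneg fun z => norm_nonneg _
  set M : ℝ := R * K with hM
  clear_value K M
  have hM0 : 0 ≤ M := by rw [hM]; exact mul_nonneg hR.le hK0
  -- integrability of the convolution integrand
  obtain ⟨C, hC⟩ := hgcont.bounded_above_of_compact_support hgsupp
  have hconv : ∀ (ρ : EuclideanSpace ℝ (Fin N) → ℝ), Integrable ρ → ∀ x : EuclideanSpace ℝ (Fin N),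
      Integrable (fun y => ρ y • g (x - y)) := by
    intro ρ hρ x
    refine Integrable.mono' (hρ.norm.mul_const C) ?_ ?_
    · exact hρ.aestronglyMeasurable.smul
        ((hgcont.comp (continuous_const.sub continuous_id)).aestronglyMeasurable)
    · filter_upwards with y
      rw [norm_smul]
      exact mul_le_mul_of_nonneg_left (hC _) (norm_nonneg _)
  -- pointwise bound on ‖a x‖
  have hbound : ∀ (ρ : EuclideanSpace ℝ (Fin N) → ℝ), Integrable ρ → (∀ y, ρ y ∈ Set.Icc 0 R) → ∀ x : EuclideanSpace ℝ (Fin N),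
      ‖∫ y, ρ y • g (x - y)‖ ≤ M := by
    intro ρ hρ hb x
    calc ‖∫ y, ρ y • g (x - y)‖ ≤ ∫ y, ‖ρ y • g (x - y)‖ :=
          norm_integral_le_integral_norm _
      _ ≤ ∫ y, R * ‖g (x - y)‖ := by
          apply integral_mono_of_nonneg
          · filter_upwards with y; exact norm_nonneg _
          · exact (hgInt.norm.comp_sub_left x).const_mul R
          · filter_upwards with y
            rw [norm_smul, Real.norm_eq_abs, abs_of_nonneg (hb y).1]
            exact mul_le_mul_of_nonneg_right (hb y).2 (norm_nonneg _)
      _ = R * ∫ y, ‖g (x - y)‖ := integral_const_mul R _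
      _ = M := by rw [hM, hK, integral_sub_left_eq_self (fun z => ‖g z‖) volume x]
  -- difference of the convolutions
  have hab : ∀ x : EuclideanSpace ℝ (Fin N), (∫ y, r₁ y • g (x - y)) - (∫ y, r₂ y • g (x - y))
      = ∫ y, (r₁ y - r₂ y) • g (x - y) := by
    intro x
    rw [← integral_sub (hconv r₁ h1 x) (hconv r₂ h2 x)]
    congr 1; funext y; rw [sub_smul]
  -- pointwise Lipschitz bound
  have hpt : ∀ x : EuclideanSpace ℝ (Fin N), ‖I r₁ x - I r₂ x‖
      ≤ (ε * (1 + M ^ 2)) * ∫ y, |r₁ y - r₂ y| * ‖g (x - y)‖ := by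
    intro x
    set a : EuclideanSpace ℝ (Fin N) := ∫ y, r₁ y • g (x - y) with hadef
    set b : EuclideanSpace ℝ (Fin N) := ∫ y, r₂ y • g (x - y) with hbdef
    clear_value a b
    have hnorm : ‖I r₁ x - I r₂ x‖
        = ε * ‖(Real.sqrt (1 + ‖a‖ ^ 2))⁻¹ • a - (Real.sqrt (1 + ‖b‖ ^ 2))⁻¹ • b‖ := by
      rw [hI r₁ x, hI r₂ x, ← hadef, ← hbdef, mul_smul, mul_smul]
      have hrw : ∀ u v : EuclideanSpace ℝ (Fin N),
          -(ε • u) - -(ε • v) = -(ε • (u - v)) := by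
        intro u v; rw [smul_sub]; abel
      rw [hrw, norm_neg, norm_smul, Real.norm_eq_abs, abs_of_pos hε]
    rw [hnorm]
    have hka : ‖a‖ ≤ M := by rw [hadef]; exact hbound r₁ h1 hb1 x
    have hkb : ‖b‖ ≤ M := by rw [hbdef]; exact hbound r₂ h2 hb2 x
    have hkey := key_frac M a b hka hkb
    have habn : ‖a - b‖ ≤ ∫ y, |r₁ y - r₂ y| * ‖g (x - y)‖ := by
      rw [hadef, hbdef, hab x]
      calc ‖∫ y, (r₁ y - r₂ y) • g (x - y)‖ ≤ ∫ y, ‖(r₁ y - r₂ y) • g (x - y)‖ :=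
            norm_integral_le_integral_norm _
        _ = ∫ y, |r₁ y - r₂ y| * ‖g (x - y)‖ := by
            congr 1; funext y; rw [norm_smul, Real.norm_eq_abs]
    calc ε * ‖(Real.sqrt (1 + ‖a‖ ^ 2))⁻¹ • a - (Real.sqrt (1 + ‖b‖ ^ 2))⁻¹ • b‖
        ≤ ε * ((1 + M ^ 2) * ‖a - b‖) := mul_le_mul_of_nonneg_left hkey hε.le
      _ ≤ ε * ((1 + M ^ 2) * ∫ y, |r₁ y - r₂ y| * ‖g (x - y)‖) := by
          apply mul_le_mul_of_nonneg_left _ hε.le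
          apply mul_le_mul_of_nonneg_left habn (add_nonneg zero_le_one (sq_nonneg M))
      _ = (ε * (1 + M ^ 2)) * ∫ y, |r₁ y - r₂ y| * ‖g (x - y)‖ := by ring
  -- product integrability
  set d : EuclideanSpace ℝ (Fin N) → ℝ := fun y => |r₁ y - r₂ y| with hd
  have hdInt : Integrable d := (h1.sub h2).abs
  have H : Integrable (fun p : EuclideanSpace ℝ (Fin N) × EuclideanSpace ℝ (Fin N) => d p.2 * ‖g (p.1 - p.2)‖)
      (volume.prod volume) :=
    hdInt.convolution_integrand (ContinuousLinearMap.mul ℝ ℝ) hgInt.norm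
  have Hconv : Integrable (fun x : EuclideanSpace ℝ (Fin N) => ∫ y, d y * ‖g (x - y)‖) :=
    H.integral_prod_left
  have Hswap : (∫ x : EuclideanSpace ℝ (Fin N), ∫ y, d y * ‖g (x - y)‖) = (∫ y, d y) * K := by
    rw [integral_integral_swap H]
    have : ∀ y : EuclideanSpace ℝ (Fin N), (∫ x : EuclideanSpace ℝ (Fin N), d y * ‖g (x - y)‖) = d y * K := by
      intro y
      rw [integral_const_mul, hK, integral_sub_right_eq_self (fun z => ‖g z‖) y]
    simp_rw [this]
    exact integral_mul_const K d
  -- conclusion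
  calc (∫ x, ‖I r₁ x - I r₂ x‖)
      ≤ ∫ x : EuclideanSpace ℝ (Fin N), (ε * (1 + M ^ 2)) * ∫ y, d y * ‖g (x - y)‖ := by
        apply integral_mono_of_nonneg
        · filter_upwards with x; exact norm_nonneg _
        · exact Hconv.const_mul _
        · filter_upwards with x; exact hpt x
    _ = (ε * (1 + M ^ 2)) * ((∫ y, d y) * K) := by
        rw [integral_const_mul, Hswap]
    _ = ε * (1 + R ^ 2 * K ^ 2) * K * ∫ y, |r₁ y - r₂ y| := by
        rw [hM]; ring
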